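/- Let E = EuclideanSpace ℝ (Fin 3), let h : E × ℝ → ℝ be continuously differentiable, let γ > 0, and let y : ℝ → E be differentiable. Suppose that for all t ≥ 0, ⟪∇_y h(y(t), t), y'(t)⟫ + ∂h/∂t(y(t), t) ≥ -γ·h(y(t), t), and that h(y(0), 0) ≥ 0. Then h(y(t), t) ≥ 0 for all t ≥ 0 (forward invariance of the time-varying safe set C(t) = {y : h(y, t) ≥ 0} along the trajectory). -/

import Mathlib

open scoped RealInnerProductSpace

/-- Forward invariance of a time-varying safe set: if along the trajectory the
time-varying CBF condition `⟪∇_y h, ẏ⟫ + ∂h/∂t ≥ -γ h` holds for all `t ≥ 0` and the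
trajectory starts in the safe set, then `h(y(t), t) ≥ 0` for all `t ≥ 0`. -/
theorem forward_invariance_time_varying
    (h : EuclideanSpace ℝ (Fin 3) × ℝ → ℝ) (hh : ContDiff ℝ 1 h)
    (γ : ℝ) (hγ : 0 < γ)
    (y : ℝ → EuclideanSpace ℝ (Fin 3)) (hy : Differentiable ℝ y)
    (hcbf : ∀ t, 0 ≤ t →
      ⟪gradient (fun x => h (x, t)) (y t), deriv y t⟫ +
        deriv (fun s => h (y t, s)) t ≥ -γ * h (y t, t))
    (h0 : h (y 0, 0) ≥ 0) :
    ∀ t, 0 ≤ t → h (y t, t) ≥ 0 := by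
  have hdiff : Differentiable ℝ h := hh.differentiable one_ne_zero
  set g : ℝ → ℝ := fun s => h (y s, s) with hgdef
  -- derivative of g
  have hgd : ∀ t, HasDerivAt g
      (⟪gradient (fun x => h (x, t)) (y t), deriv y t⟫ +
        deriv (fun s => h (y t, s)) t) t := by
    intro t
    have hF : HasFDerivAt h (fderiv ℝ h (y t, t)) (y t, t) := (hdiff _).hasFDerivAt
    have hc : HasDerivAt (fun s => (y s, s)) (deriv y t, (1 : ℝ)) t :=
      HasDerivAt.prodMk (hy t).hasDerivAt (hasDerivAt_id t)
    have hg1 : HasDerivAt (fun s => h (y s, s)) (fderiv ℝ h (y t, t) (deriv y t, 1)) t :=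
      HasFDerivAt.comp_hasDerivAt (f := fun s => (y s, s)) t hF hc
    -- partial in x
    have hx : HasFDerivAt (fun x : EuclideanSpace ℝ (Fin 3) => h (x, t))
        ((fderiv ℝ h (y t, t)).comp (ContinuousLinearMap.inl ℝ _ ℝ)) (y t) := by
      have : HasFDerivAt (fun x : EuclideanSpace ℝ (Fin 3) => (x, t))
          (ContinuousLinearMap.inl ℝ (EuclideanSpace ℝ (Fin 3)) ℝ) (y t) :=
        HasFDerivAt.prodMk (hasFDerivAt_id (y t)) (hasFDerivAt_const t (y t))
      exact hF.comp (y t) this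
    have hgrad : gradient (fun x => h (x, t)) (y t) =
        (InnerProductSpace.toDual ℝ _).symm
          ((fderiv ℝ h (y t, t)).comp (ContinuousLinearMap.inl ℝ _ ℝ)) :=
      hx.hasGradientAt.gradient
    have hinner : ⟪gradient (fun x => h (x, t)) (y t), deriv y t⟫ =
        fderiv ℝ h (y t, t) (deriv y t, 0) := by
      rw [hgrad, InnerProductSpace.toDual_symm_apply]
      rfl
    -- partial in s
    have hs : HasDerivAt (fun s => h (y t, s)) (fderiv ℝ h (y t, t) (0, 1)) t :=
      hF.comp_hasDerivAt t (HasDerivAt.prodMk (hasDerivAt_const t (y t)) (hasDerivAt_id t))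
    rw [hinner, hs.deriv]
    have : fderiv ℝ h (y t, t) (deriv y t, 1) =
        fderiv ℝ h (y t, t) (deriv y t, 0) + fderiv ℝ h (y t, t) (0, 1) := by
      rw [← map_add]; norm_num
    rw [this] at hg1
    exact hg1
  -- define f = exp(γ t) * g t, monotone on Ici 0
  set f : ℝ → ℝ := fun s => Real.exp (γ * s) * g s with hfdef
  have hgdiff : Differentiable ℝ g := fun t => (hgd t).differentiableAt
  have hfd : ∀ t, HasDerivAt f
      (Real.exp (γ * t) * (γ * g t + deriv g t)) t := by
    intro t
    have h1 : HasDerivAt (fun s => Real.exp (γ * s)) (γ * Real.exp (γ * t)) t := by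
      simpa [mul_comm] using ((hasDerivAt_id t).const_mul γ).exp
    have := h1.mul (hgd t)
    rw [(hgd t).deriv]
    refine this.congr_deriv ?_
    ring
  have hmono : MonotoneOn f (Set.Ici (0 : ℝ)) := by
    apply monotoneOn_of_deriv_nonneg (convex_Ici 0)
    · exact (Continuous.mul (by continuity) (Differentiable.continuous hgdiff)).continuousOn
    · intro t _
      exact (hfd t).differentiableAt.differentiableWithinAt
    · intro t ht
      rw [interior_Ici] at ht
      rw [(hfd t).deriv]
      have hge : γ * g t + deriv g t ≥ 0 := by
        have := hcbf t (le_of_lt ht)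
        rw [(hgd t).deriv]
        nlinarith [this]
      positivity
  intro t ht
  have hft : f 0 ≤ f t := hmono (Set.mem_Ici.2 le_rfl) ht ht
  have hf0 : f 0 = g 0 := by simp [hfdef]
  have h1 : (0:ℝ) ≤ f t := le_trans (by rw [hf0]; exact h0) hft
  have h2 : (0:ℝ) ≤ Real.exp (γ * t) * g t := h1
  have h3 := Real.exp_pos (γ * t)
  show g t ≥ 0
  nlinarith [h2, h3]
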